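/- Let s be a sequence in L_P for a monic polynomial P of degree m, and suppose the Hankel matrix H_s = (s_{i+j})_{0 ≤ i,j ≤ m-1} is invertible. Then for every sequence v ∈ L_P there exist unique rational coefficients α₀, ..., α_{m-1} with v = Σ_{i=0}^{m-1} αᵢ σⁱ s; equivalently, the shifted sequences σⁱ s for 0 ≤ i ≤ m-1 form a basis of L_P, and (α₀,...,α_{m-1})ᵀ = H_s⁻¹ V_v. -/
import Mathlib


/-- The space `L_P` of rational sequences satisfying the linear recurrence given
by the monic polynomial `P = Xᵐ - Σ_{i<m} αᵢ Xⁱ`. -/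
def LP (m : ℕ) (α : Fin m → ℚ) : Submodule ℚ (ℕ → ℚ) where
  carrier := { s | ∀ n, s (n + m) = ∑ i : Fin m, α i * s (n + (i : ℕ)) }
  add_mem' := by
    intro a b ha hb n
    simp only [Pi.add_apply, ha n, hb n, mul_add, Finset.sum_add_distrib]
  zero_mem' := by intro n; simp
  smul_mem' := by
    intro c a ha n
    simp only [Pi.smul_apply, smul_eq_mul, ha n, Finset.mul_sum]
    exact Finset.sum_congr rfl fun i _ => by ring

/-- The Hankel matrix `H_s = (s_{i+j})_{0 ≤ i,j < m}` of a sequence `s`. -/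
def hankel (m : ℕ) (s : ℕ → ℚ) : Matrix (Fin m) (Fin m) ℚ :=
  fun i j => s ((i : ℕ) + (j : ℕ))

lemma LP_ext (m : ℕ) (α : Fin m → ℚ) {v w : ℕ → ℚ} (hv : v ∈ LP m α)
    (hw : w ∈ LP m α) (h : ∀ k : Fin m, v (k : ℕ) = w (k : ℕ)) : v = w := by
  funext n
  induction n using Nat.strong_induction_on with
  | _ n ih =>
    rcases lt_or_ge n m with hn | hn
    · exact h ⟨n, hn⟩
    · obtain ⟨k, rfl⟩ : ∃ k, n = k + m := ⟨n - m, (Nat.sub_add_cancel hn).symm⟩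
      rw [hv k, hw k]
      refine Finset.sum_congr rfl fun i _ => ?_
      rw [ih (k + i) (by omega)]

lemma comb_mem (m : ℕ) (α : Fin m → ℚ) {s : ℕ → ℚ} (hs : s ∈ LP m α)
    (c : Fin m → ℚ) : (fun n => ∑ i : Fin m, c i * s (n + (i : ℕ))) ∈ LP m α := by
  intro n
  simp only
  calc ∑ i : Fin m, c i * s (n + m + (i : ℕ))
      = ∑ i : Fin m, ∑ j : Fin m, c i * (α j * s (n + i + j)) := by
        refine Finset.sum_congr rfl fun i _ => ?_
        rw [show n + m + (i:ℕ) = n + (i:ℕ) + m by ring, hs (n + i), Finset.mul_sum]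
    _ = ∑ j : Fin m, ∑ i : Fin m, c i * (α j * s (n + i + j)) := Finset.sum_comm
    _ = ∑ j : Fin m, α j * ∑ i : Fin m, c i * s (n + j + i) := by
        refine Finset.sum_congr rfl fun j _ => ?_
        rw [Finset.mul_sum]
        refine Finset.sum_congr rfl fun i _ => ?_
        rw [show n + (i:ℕ) + (j:ℕ) = n + (j:ℕ) + (i:ℕ) by ring]; ring

/-- if `s ∈ L_P` has invertible Hankel matrix, then every `v ∈ L_P`
is a unique rational linear combination `v = Σ_{i<m} αᵢ σⁱ s` of the shifted
sequences `σⁱ s` (so these form a basis of `L_P`), with coefficient vector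
`H_s⁻¹ V_v`. -/
theorem hankel_shifted_basis (m : ℕ) (α : Fin m → ℚ) (s : ℕ → ℚ)
    (hs : s ∈ LP m α) (hH : IsUnit (hankel m s)) (v : ℕ → ℚ) (hv : v ∈ LP m α) :
    (∃! c : Fin m → ℚ, v = fun n => ∑ i : Fin m, c i * s (n + (i : ℕ))) ∧
    v = fun n => ∑ i : Fin m,
      ((hankel m s)⁻¹.mulVec (fun j : Fin m => v (j : ℕ))) i * s (n + (i : ℕ)) := by
  set H := hankel m s with hHdef
  have hdet : IsUnit H.det := (Matrix.isUnit_iff_isUnit_det _).mp hH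
  set V : Fin m → ℚ := fun j : Fin m => v (j : ℕ) with hV
  set c₀ : Fin m → ℚ := H⁻¹.mulVec V with hc₀
  have key : v = fun n => ∑ i : Fin m, c₀ i * s (n + (i : ℕ)) := by
    refine LP_ext m α hv (comb_mem m α hs c₀) fun k => ?_
    have : ∑ i : Fin m, c₀ i * s ((k : ℕ) + (i : ℕ)) = (H.mulVec c₀) k := by
      simp only [Matrix.mulVec, dotProduct, hHdef, hankel]
      exact Finset.sum_congr rfl fun i _ => mul_comm _ _
    rw [this, hc₀, Matrix.mulVec_mulVec, Matrix.mul_nonsing_inv _ hdet,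
      Matrix.one_mulVec]
  refine ⟨⟨c₀, key, fun c hc => ?_⟩, key⟩
  have hmul : H.mulVec c = V := by
    funext j
    have := congr_fun hc (j : ℕ)
    simp only [Matrix.mulVec, dotProduct, hHdef, hankel, hV]
    rw [this]
    exact (Finset.sum_congr rfl fun i _ => mul_comm _ _).symm
  rw [hc₀, ← hmul, Matrix.mulVec_mulVec, Matrix.nonsing_inv_mul _ hdet,
    Matrix.one_mulVec]
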